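/- Let M₁,...,Mₙ be i.i.d. nonnegative integer-valued random variables with common pgf φ, let u ∈ [0,1] and i ≥ 1. Then E[((M₁)_i / (Σ_{l=1}^n M_l)_i) · u^{Σ_{l=1}^n M_l}] = (u^i/Γ(i)) ∫₀¹ (1-z)^(i-1) φ(uz)^(n-1) φ^(i)(uz) dz. -/

import Mathlib

open MeasureTheory Set intervalIntegral
open scoped ENNReal NNReal

open MeasureTheory Set intervalIntegral

lemma beta_nat (j : ℕ) : ∀ k : ℕ, ∫ z in (0:ℝ)..1, z ^ k * (1 - z) ^ j
    = (k.factorial * j.factorial : ℝ) / ((k + j + 1).factorial) := by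
  induction j with
  | zero =>
    intro k
    simp only [pow_zero, mul_one, integral_pow, Nat.factorial_zero, Nat.cast_one]
    rw [Nat.add_zero, Nat.factorial_succ]
    have : (k.factorial : ℝ) ≠ 0 := Nat.cast_ne_zero.2 k.factorial_ne_zero
    push_cast
    rw [one_pow, zero_pow (by omega), sub_zero]
    field_simp
  | succ j IH =>
    intro k
    have hu : ∀ x ∈ uIcc (0:ℝ) 1, HasDerivAt (fun z:ℝ => (1-z)^(j+1))
        (-(((j:ℝ)+1) * (1-x)^j)) x := by
      intro x _
      have h : HasDerivAt (fun z:ℝ => (1-z)^(j+1)) _ x := ((hasDerivAt_id x).const_sub (1:ℝ)).pow (j+1)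
      convert h using 1
      push_cast
      ring_nf
      simp
    have hv : ∀ x ∈ uIcc (0:ℝ) 1, HasDerivAt (fun z:ℝ => z^(k+1)/((k:ℝ)+1)) (x^k) x := by
      intro x _
      have h : HasDerivAt (fun z:ℝ => z^(k+1)/((k:ℝ)+1)) _ x := (hasDerivAt_pow (k+1) x).div_const ((k:ℝ)+1)
      convert h using 1
      have : ((k:ℝ)+1) ≠ 0 := by positivity
      push_cast
      field_simp
    have int1 : IntervalIntegrable (fun x:ℝ => -(((j:ℝ)+1) * (1-x)^j)) volume 0 1 :=
      (Continuous.intervalIntegrable (by continuity) _ _)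
    have int2 : IntervalIntegrable (fun x:ℝ => x^k) volume 0 1 :=
      (Continuous.intervalIntegrable (by continuity) _ _)
    have H := intervalIntegral.integral_mul_deriv_eq_deriv_mul hu hv int1 int2
    have e1 : ∫ z in (0:ℝ)..1, z ^ k * (1 - z) ^ (j+1)
        = ∫ x in (0:ℝ)..1, (1-x)^(j+1) * x ^ k := by
      congr 1; funext x; ring
    rw [e1, H]
    have e2 : ∫ x in (0:ℝ)..1, -(((j:ℝ)+1) * (1-x)^j) * (x^(k+1)/((k:ℝ)+1))
        = -((((j:ℝ)+1)/((k:ℝ)+1)) * ∫ x in (0:ℝ)..1, x^(k+1) * (1-x)^j) := by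
      rw [← intervalIntegral.integral_const_mul, ← intervalIntegral.integral_neg]
      congr 1; funext x
      have hk : ((k:ℝ)+1) ≠ 0 := by positivity
      field_simp
    rw [e2, IH (k+1)]
    have h1 : ((k+1:ℕ).factorial : ℝ) = ((k:ℝ)+1) * k.factorial := by
      rw [Nat.factorial_succ]; push_cast; ring
    have h2 : ((j+1:ℕ).factorial : ℝ) = ((j:ℝ)+1) * j.factorial := by
      rw [Nat.factorial_succ]; push_cast; ring
    have h3 : (k + 1 + j + 1) = (k + (j+1) + 1) := by omega
    have hk : ((k:ℝ)+1) ≠ 0 := by positivity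
    have hkf : ((k + (j+1) + 1).factorial : ℝ) ≠ 0 := Nat.cast_ne_zero.2 (Nat.factorial_ne_zero _)
    rw [h3, h1, h2]
    rw [one_pow, sub_self, zero_pow (by omega : j+1 ≠ 0)]
    rw [zero_pow (by omega : k+1 ≠ 0)]
    field_simp
    ring


lemma summable_desc (i : ℕ) {r : ℝ} (h0 : 0 ≤ r) (h1 : r < 1) :
    Summable (fun m : ℕ => (m.descFactorial i : ℝ) * r ^ (m - i)) := by
  rcases eq_or_lt_of_le h0 with rfl | hr
  · apply summable_of_ne_finset_zero (s := Finset.range (i+1))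
    intro m hm
    simp only [Finset.mem_range, not_lt] at hm
    rw [zero_pow (by omega : m - i ≠ 0), mul_zero]
  · have hsum : Summable (fun m : ℕ => (r^i)⁻¹ * (((m:ℝ))^i * r ^ m)) := by
      apply Summable.mul_left
      have := summable_pow_mul_geometric_of_norm_lt_one (R := ℝ) i
        (r := r) (by rw [Real.norm_eq_abs, abs_of_nonneg h0]; exact h1)
      simpa [mul_comm] using this
    apply Summable.of_nonneg_of_le (fun m => by positivity) (fun m => ?_) hsum
    have hb1 : (m.descFactorial i : ℝ) ≤ (m:ℝ)^i := by
      have := Nat.descFactorial_le_pow m i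
      exact_mod_cast this
    have hb2 : r ^ (m - i) ≤ (r^i)⁻¹ * r ^ m := by
      rw [← div_eq_inv_mul, le_div_iff₀ (by positivity)]
      rw [← pow_add]
      exact pow_le_pow_of_le_one h0 h1.le (by omega)
    calc (m.descFactorial i : ℝ) * r ^ (m - i)
        ≤ (m:ℝ)^i * ((r^i)⁻¹ * r ^ m) :=
          mul_le_mul hb1 hb2 (by positivity) (by positivity)
      _ = (r^i)⁻¹ * (((m:ℝ))^i * r ^ m) := by ring

lemma summable_a_desc {a : ℕ → ℝ} (ha0 : ∀ m, 0 ≤ a m) (ha1 : ∀ m, a m ≤ 1)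
    (i : ℕ) {r : ℝ} (h0 : 0 ≤ r) (h1 : r < 1) :
    Summable (fun m : ℕ => a m * ((m.descFactorial i : ℝ) * r ^ (m - i))) := by
  apply Summable.of_nonneg_of_le (fun m => mul_nonneg (ha0 m) (by positivity)) (fun m => ?_) (summable_desc i h0 h1)
  calc a m * ((m.descFactorial i : ℝ) * r ^ (m - i))
      ≤ 1 * ((m.descFactorial i : ℝ) * r ^ (m - i)) := by
        apply mul_le_mul_of_nonneg_right (ha1 m) (by positivity)
    _ = _ := one_mul _

lemma hasDerivAt_g {a : ℕ → ℝ} (ha0 : ∀ m, 0 ≤ a m) (ha1 : ∀ m, a m ≤ 1)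
    (i : ℕ) {w : ℝ} (hw : w ∈ Set.Ioo (-1:ℝ) 1) :
    HasDerivAt (fun y => ∑' m : ℕ, a m * ((m.descFactorial i : ℝ) * y ^ (m - i)))
      (∑' m : ℕ, a m * ((m.descFactorial (i+1) : ℝ) * w ^ (m - (i+1)))) w := by
  obtain ⟨hw1, hw2⟩ := hw
  set r : ℝ := (1 + |w|)/2 with hr
  have hwa : |w| < 1 := abs_lt.2 ⟨hw1, hw2⟩
  have hrw : |w| < r := by rw [hr]; linarith
  have hr0 : 0 ≤ r := by positivity
  have hr1 : r < 1 := by rw [hr]; linarith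
  apply hasDerivAt_tsum_of_isPreconnected
    (u := fun m : ℕ => (m.descFactorial (i+1) : ℝ) * r ^ (m - (i+1)))
    (summable_desc (i+1) hr0 hr1) (isOpen_Ioo (a := -r) (b := r))
    (isPreconnected_Ioo)
    (g' := fun m y => a m * ((m.descFactorial (i+1) : ℝ) * y ^ (m - (i+1))))
    ?_ ?_ (y₀ := w) ?_ ?_ ?_
  · intro m y hy
    have h := (hasDerivAt_pow (m - i) y).const_mul (a m * (m.descFactorial i : ℝ))
    have hval : a m * ((m.descFactorial (i+1) : ℝ) * y ^ (m - (i+1)))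
        = a m * (m.descFactorial i : ℝ) * (((m - i : ℕ) : ℝ) * y ^ (m - i - 1)) := by
      rcases Nat.lt_or_ge m (i+1) with hmi | hmi
      · have h1 : m.descFactorial (i+1) = 0 := Nat.descFactorial_eq_zero_iff_lt.2 hmi
        have h2 : m - i = 0 := by omega
        simp [h1, h2]
      · have h2 : m - i - 1 = m - (i+1) := by omega
        have h3 : (m.descFactorial (i+1) : ℝ) = ((m - i : ℕ) : ℝ) * (m.descFactorial i : ℝ) := by
          rw [Nat.descFactorial_succ]; push_cast; ring
        rw [h3, h2]
        ring
    rw [hval]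
    simpa [mul_assoc] using h
  · intro m y hy
    rw [Real.norm_eq_abs, abs_mul, abs_mul]
    have hya : |y| ≤ r := le_of_lt (abs_lt.2 ⟨hy.1, hy.2⟩)
    rw [abs_of_nonneg (ha0 m), abs_of_nonneg (by positivity : (0:ℝ) ≤ (m.descFactorial (i+1) : ℝ)), abs_pow]
    calc a m * ((m.descFactorial (i+1) : ℝ) * |y| ^ (m - (i+1)))
        ≤ 1 * ((m.descFactorial (i+1) : ℝ) * r ^ (m - (i+1))) := by
          apply mul_le_mul (ha1 m)
          · exact mul_le_mul_of_nonneg_left (pow_le_pow_left₀ (abs_nonneg _) hya _) (by positivity)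
          · positivity
          · norm_num
      _ = _ := one_mul _
  · exact ⟨neg_lt_of_abs_lt hrw, lt_of_abs_lt hrw⟩
  · apply Summable.of_norm
    apply Summable.of_nonneg_of_le (fun m => norm_nonneg _) (fun m => ?_)
      (summable_desc i (abs_nonneg w) hwa)
    rw [Real.norm_eq_abs, abs_mul, abs_mul, abs_pow]
    rw [abs_of_nonneg (ha0 m), abs_of_nonneg (by positivity : (0:ℝ) ≤ (m.descFactorial i : ℝ))]
    calc a m * ((m.descFactorial i : ℝ) * |w| ^ (m - i))
        ≤ 1 * ((m.descFactorial i : ℝ) * |w| ^ (m - i)) :=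
          mul_le_mul_of_nonneg_right (ha1 m) (by positivity)
      _ = _ := one_mul _
  · exact ⟨neg_lt_of_abs_lt hrw, lt_of_abs_lt hrw⟩

lemma iterD {a : ℕ → ℝ} (ha0 : ∀ m, 0 ≤ a m) (ha1 : ∀ m, a m ≤ 1) (i : ℕ) :
    Set.EqOn (iteratedDeriv i (fun w => ∑' m : ℕ, a m * w ^ m))
      (fun w => ∑' m : ℕ, a m * ((m.descFactorial i : ℝ) * w ^ (m - i)))
      (Set.Ioo (-1:ℝ) 1) := by
  induction i with
  | zero =>
    intro w hw
    simp only [iteratedDeriv_zero, Nat.descFactorial_zero, Nat.cast_one, one_mul, Nat.sub_zero]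
  | succ i IH =>
    intro w hw
    rw [iteratedDeriv_succ]
    have h1 : deriv (iteratedDeriv i (fun w => ∑' m : ℕ, a m * w ^ m)) w
        = deriv (fun w => ∑' m : ℕ, a m * ((m.descFactorial i : ℝ) * w ^ (m - i))) w := by
      apply Filter.EventuallyEq.deriv_eq
      exact Filter.eventuallyEq_of_mem (isOpen_Ioo.mem_nhds hw) IH
    rw [h1, (hasDerivAt_g ha0 ha1 i hw).deriv]

lemma tsum_pi_prod : ∀ {n : ℕ} (h : Fin n → ℕ → ℝ), (∀ l m, 0 ≤ h l m) → (∀ l, Summable (h l)) →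
    Summable (fun f : Fin n → ℕ => ∏ l, h l (f l)) ∧
    (∑' f : Fin n → ℕ, ∏ l, h l (f l)) = ∏ l, ∑' m, h l m := by
  intro n
  induction n with
  | zero =>
    intro h h0 hs
    have hu : HasSum (fun f : Fin 0 → ℕ => ∏ l, h l (f l)) 1 := by
      have := hasSum_single (f := fun f : Fin 0 → ℕ => ∏ l, h l (f l))
        (fun i => i.elim0) (fun b hb => absurd (funext fun i => i.elim0) (Ne.symm hb))
      simpa using this
    exact ⟨hu.summable, by simpa using hu.tsum_eq⟩
  | succ n IH =>
    intro h h0 hs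
    obtain ⟨IHsum, IHeq⟩ := IH (fun l => h l.succ) (fun l m => h0 _ m) (fun l => hs _)
    set G : (Fin (n+1) → ℕ) → ℝ := fun f => ∏ l, h l (f l) with hG
    set e : ℕ × (Fin n → ℕ) ≃ (Fin (n+1) → ℕ) := Fin.consEquiv (fun _ => ℕ) with he
    have key : ∀ q : ℕ × (Fin n → ℕ),
        G (e q) = h 0 q.1 * ∏ l : Fin n, h l.succ (q.2 l) := by
      rintro ⟨m, g⟩
      simp only [hG, he, Fin.consEquiv_apply]
      rw [Fin.prod_univ_succ]
      simp [Fin.cons_succ, Fin.cons_zero]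
    have hFsum : Summable (fun q : ℕ × (Fin n → ℕ) => h 0 q.1 * ∏ l : Fin n, h l.succ (q.2 l)) := by
      have h1 : (0:ℕ → ℝ) ≤ h 0 := fun m => h0 0 m
      have h2 : (0 : (Fin n → ℕ) → ℝ) ≤ fun g : Fin n → ℕ => ∏ l, h l.succ (g l) :=
        fun g => Finset.prod_nonneg fun l _ => h0 _ _
      have := Summable.mul_of_nonneg (hs 0) IHsum h1 h2
      exact this
    have hGsum : Summable G := by
      rw [← e.summable_iff]
      exact Summable.congr hFsum (fun q => (key q).symm)
    refine ⟨hGsum, ?_⟩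
    calc (∑' f : Fin (n+1) → ℕ, G f) = ∑' q : ℕ × (Fin n → ℕ), G (e q) := (e.tsum_eq G).symm
      _ = ∑' q : ℕ × (Fin n → ℕ), h 0 q.1 * ∏ l : Fin n, h l.succ (q.2 l) := by
          exact tsum_congr key
      _ = (∑' m, h 0 m) * (∑' g : Fin n → ℕ, ∏ l : Fin n, h l.succ (g l)) :=
          (Summable.tsum_mul_tsum (hs 0) IHsum hFsum).symm
      _ = ∏ l : Fin (n+1), ∑' m, h l m := by
          rw [IHeq, Fin.prod_univ_succ]

lemma pointwise_eq {a : ℕ → ℝ} (ha0 : ∀ m, 0 ≤ a m) (ha1 : ∀ m, a m ≤ 1)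
    (n i : ℕ) (hn : 1 ≤ n) {w : ℝ} (hw0 : 0 ≤ w) (hw1 : w < 1) :
    ((∑' m : ℕ, a m * w ^ m) ^ (n - 1)) * (∑' m : ℕ, a m * ((m.descFactorial i : ℝ) * w ^ (m - i)))
      = ∑' f : Fin n → ℕ, (∏ l, a (f l)) *
          (((f ⟨0, hn⟩).descFactorial i : ℝ) * w ^ ((∑ l, f l) - i)) := by
  classical
  set z₀ : Fin n := ⟨0, hn⟩ with hz₀
  obtain ⟨hSum, hEq⟩ := tsum_pi_prod
    (fun l m => if l = z₀ then a m * ((m.descFactorial i : ℝ) * w ^ (m - i)) else a m * w ^ m)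
    (by
      intro l m
      by_cases hl : l = z₀ <;> simp only [hl, if_true, if_false] <;>
        exact mul_nonneg (ha0 m) (by positivity))
    (by
      intro l
      by_cases hl : l = z₀
      · simp only [hl, if_true]
        exact summable_a_desc ha0 ha1 i hw0 hw1
      · simp only [hl, if_false]
        exact (summable_a_desc ha0 ha1 0 hw0 hw1).congr (fun m => by simp))
  have hprod : (∏ l : Fin n, ∑' m : ℕ,
        if l = z₀ then a m * ((m.descFactorial i : ℝ) * w ^ (m - i)) else a m * w ^ m)
      = (∑' m : ℕ, a m * ((m.descFactorial i : ℝ) * w ^ (m - i)))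
          * (∑' m : ℕ, a m * w ^ m) ^ (n - 1) := by
    rw [← Finset.mul_prod_erase Finset.univ _ (Finset.mem_univ z₀)]
    have hc : ∀ l ∈ Finset.univ.erase z₀, (∑' m : ℕ,
        if l = z₀ then a m * ((m.descFactorial i : ℝ) * w ^ (m - i)) else a m * w ^ m)
        = ∑' m : ℕ, a m * w ^ m := by
      intro l hl
      exact tsum_congr (fun m => by simp [(Finset.mem_erase.1 hl).1])
    rw [Finset.prod_congr rfl hc, Finset.prod_const,
      Finset.card_erase_of_mem (Finset.mem_univ z₀), Finset.card_univ, Fintype.card_fin]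
    simp
  have hterm : ∀ f : Fin n → ℕ, (∏ l : Fin n,
        if l = z₀ then a (f l) * (((f l).descFactorial i : ℝ) * w ^ (f l - i)) else a (f l) * w ^ (f l))
      = (∏ l, a (f l)) * (((f z₀).descFactorial i : ℝ) * w ^ ((∑ l, f l) - i)) := by
    intro f
    rw [← Finset.mul_prod_erase Finset.univ _ (Finset.mem_univ z₀),
      ← Finset.mul_prod_erase Finset.univ (fun l => a (f l)) (Finset.mem_univ z₀),
      ← Finset.add_sum_erase Finset.univ f (Finset.mem_univ z₀)]
    have herase : (∏ l ∈ Finset.univ.erase z₀,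
        if l = z₀ then a (f l) * (((f l).descFactorial i : ℝ) * w ^ (f l - i)) else a (f l) * w ^ (f l))
        = (∏ l ∈ Finset.univ.erase z₀, a (f l)) * w ^ (∑ l ∈ Finset.univ.erase z₀, f l) := by
      rw [← Finset.prod_pow_eq_pow_sum, ← Finset.prod_mul_distrib]
      apply Finset.prod_congr rfl
      intro l hl
      simp [(Finset.mem_erase.1 hl).1]
    rw [herase]
    simp only [eq_self_iff_true, if_true]
    rcases Nat.lt_or_ge (f z₀) i with hfi | hfi
    · rw [Nat.descFactorial_eq_zero_iff_lt.2 hfi]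
      simp
    · have hexp : (f z₀ + ∑ l ∈ Finset.univ.erase z₀, f l) - i
          = (f z₀ - i) + (∑ l ∈ Finset.univ.erase z₀, f l) := by omega
      rw [hexp, pow_add]
      ring
  rw [mul_comm, ← hprod, ← hEq]
  exact tsum_congr hterm

lemma Gint (i : ℕ) (u : ℝ) (s : ℕ) :
    ∫ z in (0:ℝ)..1, (1 - z) ^ (i-1) * (u*z) ^ (s-i)
      = u ^ (s-i) * (((s-i).factorial : ℝ) * ((i-1).factorial : ℝ)
          / (((s-i) + (i-1) + 1).factorial : ℝ)) := by
  have h : Set.EqOn (fun z : ℝ => (1 - z) ^ (i-1) * (u*z) ^ (s-i))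
      (fun z : ℝ => u ^ (s-i) * (z ^ (s-i) * (1 - z) ^ (i-1))) (Set.uIcc (0:ℝ) 1) := by
    intro z _
    simp only [mul_pow]
    ring
  rw [intervalIntegral.integral_congr h, intervalIntegral.integral_const_mul, beta_nat (i-1) (s-i)]

lemma term_eval (i : ℕ) (hi : 1 ≤ i) {u : ℝ} (hu0 : 0 ≤ u) (m s : ℕ) (hms : m ≤ s) :
    ((m.descFactorial i : ℝ) / (s.descFactorial i : ℝ)) * u ^ s
      = (u ^ i / ((i-1).factorial : ℝ)) *
        ∫ z in (0:ℝ)..1, (m.descFactorial i : ℝ) * ((1 - z) ^ (i-1) * (u*z) ^ (s-i)) := by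
  rw [intervalIntegral.integral_const_mul, Gint]
  rcases Nat.lt_or_ge m i with hmi | hmi
  · rw [Nat.descFactorial_eq_zero_iff_lt.2 hmi]
    simp
  · have hsi : i ≤ s := le_trans hmi hms
    have hfact : ((s-i).factorial : ℝ) * (s.descFactorial i : ℝ) = (s.factorial : ℝ) := by
      exact_mod_cast congrArg (Nat.cast (R := ℝ)) (Nat.factorial_mul_descFactorial hsi)
    have hdnz : (s.descFactorial i : ℝ) ≠ 0 := by
      have h1 : s.descFactorial i ≠ 0 := by
        rw [Ne, Nat.descFactorial_eq_zero_iff_lt]; omega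
      exact_mod_cast h1
    have hexp : (s-i) + (i-1) + 1 = s := by omega
    rw [hexp]
    have hupow : u ^ i * u ^ (s-i) = u ^ s := by rw [← pow_add]; congr 1; omega
    have hf1 : ((i-1).factorial : ℝ) ≠ 0 := Nat.cast_ne_zero.2 (Nat.factorial_ne_zero _)
    have hf2 : ((s).factorial : ℝ) ≠ 0 := Nat.cast_ne_zero.2 (Nat.factorial_ne_zero _)
    rw [← hupow]
    field_simp
    linear_combination (-((m.descFactorial i : ℝ) * u ^ i * u ^ (s - i))) * hfact


/-- For `M₁,...,Mₙ` i.i.d. with common pgf `φ`, `u ∈ [0,1]`, `i ≥ 1`: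
`E[((M₁)_i/(ΣM_l)_i) u^{ΣM_l}] = (u^i/Γ(i)) ∫₀¹ (1-z)^(i-1) φ(uz)^(n-1) φ^(i)(uz) dz`. -/
theorem stmt_2 (p : PMF ℕ) (n i : ℕ) (hn : 1 ≤ n) (hi : 1 ≤ i)
    (u : ℝ) (hu : u ∈ Set.Icc (0:ℝ) 1) :
    (∑' f : Fin n → ℕ, (∏ l, (p (f l)).toReal) *
        ((((f ⟨0, hn⟩).descFactorial i : ℝ) / ((∑ l, f l).descFactorial i : ℝ)) *
          u ^ (∑ l, f l)))
      = (u ^ i / (Nat.factorial (i - 1) : ℝ)) *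
        ∫ z in (0:ℝ)..1, (1 - z) ^ (i - 1) *
          ((fun w => ∑' m : ℕ, (p m).toReal * w ^ m) (u * z)) ^ (n - 1) *
          iteratedDeriv i (fun w => ∑' m : ℕ, (p m).toReal * w ^ m) (u * z) := by
  obtain ⟨hu0, hu1⟩ := hu
  classical
  have ha0 : ∀ m : ℕ, 0 ≤ (p m).toReal := fun m => ENNReal.toReal_nonneg
  have ha1 : ∀ m : ℕ, (p m).toReal ≤ 1 := by
    intro m
    rw [← ENNReal.toReal_one]
    exact ENNReal.toReal_mono ENNReal.one_ne_top (p.coe_le_one m)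
  set z₀ : Fin n := ⟨0, hn⟩ with hz₀
  beta_reduce
  set G : (Fin n → ℕ) → ℝ → ℝ := fun f z =>
    (∏ l, (p (f l)).toReal) *
      (((f z₀).descFactorial i : ℝ) * ((1 - z) ^ (i-1) * (u*z) ^ ((∑ l, f l) - i))) with hG
  have hmsf : ∀ f : Fin n → ℕ, f z₀ ≤ ∑ l, f l := fun f =>
    Finset.single_le_sum (fun l _ => Nat.zero_le (f l)) (Finset.mem_univ z₀)
  have hterm : ∀ f : Fin n → ℕ,
      (∏ l, (p (f l)).toReal) * ((((f z₀).descFactorial i : ℝ) / (((∑ l, f l).descFactorial i : ℝ))) * u ^ (∑ l, f l))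
      = (u ^ i / ((i-1).factorial : ℝ)) * ∫ z in (0:ℝ)..1, G f z := by
    intro f
    have h1 := term_eval i hi hu0 (f z₀) (∑ l, f l) (hmsf f)
    have h2 : (∫ z in (0:ℝ)..1, G f z)
        = (∏ l, (p (f l)).toReal) * ∫ z in (0:ℝ)..1,
            ((f z₀).descFactorial i : ℝ) * ((1 - z) ^ (i-1) * (u*z) ^ ((∑ l, f l) - i)) := by
      simp only [hG]
      exact intervalIntegral.integral_const_mul _ _
    rw [h2, h1]
    ring
  rw [tsum_congr hterm, tsum_mul_left]
  congr 1
  have contG : ∀ f : Fin n → ℕ, Continuous (G f) := by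
    intro f
    simp only [hG]
    fun_prop
  have hGnn : ∀ f : Fin n → ℕ, ∀ z ∈ Set.Ioo (0:ℝ) 1, 0 ≤ G f z := by
    intro f z hz
    simp only [hG]
    have h1 : (0:ℝ) ≤ 1 - z := by linarith [hz.2]
    have h2 : (0:ℝ) ≤ u * z := mul_nonneg hu0 hz.1.le
    have h3 : (0:ℝ) ≤ ∏ l, (p (f l)).toReal := Finset.prod_nonneg fun l _ => ha0 _
    positivity
  have hGval : ∀ f : Fin n → ℕ, (∫ z in Set.Ioo (0:ℝ) 1, G f z) = ∫ z in (0:ℝ)..1, G f z := by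
    intro f
    rw [intervalIntegral.integral_of_le zero_le_one, MeasureTheory.integral_Ioc_eq_integral_Ioo]
  have hGint : ∀ f : Fin n → ℕ, MeasureTheory.IntegrableOn (G f) (Set.Ioo (0:ℝ) 1) := fun f =>
    ((contG f).integrableOn_Icc (a := 0) (b := 1)).mono_set Set.Ioo_subset_Icc_self
  have hf2 : ∀ s : ℕ, ((s.factorial : ℝ)) ≠ 0 := fun s => Nat.cast_ne_zero.2 (Nat.factorial_ne_zero _)
  have hGbound : ∀ f : Fin n → ℕ, (∫ z in Set.Ioo (0:ℝ) 1, G f z)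
      ≤ ((i-1).factorial : ℝ) * ∏ l, (p (f l)).toReal := by
    intro f
    rw [hGval f]
    simp only [hG]
    rw [intervalIntegral.integral_const_mul, intervalIntegral.integral_const_mul, Gint]
    have h3 : (0:ℝ) ≤ ∏ l, (p (f l)).toReal := Finset.prod_nonneg fun l _ => ha0 _
    rw [mul_comm (((i-1).factorial : ℝ))]
    apply mul_le_mul_of_nonneg_left ?_ h3
    rcases Nat.lt_or_ge (f z₀) i with hfi | hfi
    · rw [Nat.descFactorial_eq_zero_iff_lt.2 hfi]
      simp
    · have hsi : i ≤ ∑ l, f l := le_trans hfi (hmsf f)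
      set s := ∑ l, f l with hs
      have hexp : (s-i)+(i-1)+1 = s := by omega
      rw [hexp]
      have hd1 : ((f z₀).descFactorial i : ℝ) ≤ (s.descFactorial i : ℝ) := by
        exact_mod_cast Nat.descFactorial_le i (hmsf f)
      have hup : u ^ (s-i) ≤ 1 := pow_le_one₀ hu0 hu1
      have hfact : ((s-i).factorial : ℝ) * (s.descFactorial i : ℝ) = (s.factorial : ℝ) := by
        exact_mod_cast congrArg (Nat.cast (R := ℝ)) (Nat.factorial_mul_descFactorial hsi)
      calc ((f z₀).descFactorial i : ℝ) * (u ^ (s-i) * (((s-i).factorial : ℝ) * ((i-1).factorial : ℝ) / (s.factorial : ℝ)))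
          ≤ (s.descFactorial i : ℝ) * (1 * (((s-i).factorial : ℝ) * ((i-1).factorial : ℝ) / (s.factorial : ℝ))) := by
            apply mul_le_mul hd1 (mul_le_mul_of_nonneg_right hup (by positivity)) (by positivity) (by positivity)
        _ = ((i-1).factorial : ℝ) * ((((s-i).factorial : ℝ) * (s.descFactorial i : ℝ)) / (s.factorial : ℝ)) := by
            ring
        _ = ((i-1).factorial : ℝ) := by
            rw [hfact, div_self (hf2 s), mul_one]
  have hmeasG : ∀ f : Fin n → ℕ, AEStronglyMeasurable (G f) (volume.restrict (Set.Ioo (0:ℝ) 1)) :=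
    fun f => (contG f).aestronglyMeasurable
  have hPsum : Summable (fun f : Fin n → ℕ => ∏ l, (p (f l)).toReal) := by
    have haS : Summable (fun m : ℕ => (p m).toReal) :=
      ENNReal.summable_toReal (by rw [p.tsum_coe]; exact ENNReal.one_ne_top)
    exact (tsum_pi_prod (fun _ m => (p m).toReal) (fun _ m => ha0 m) (fun _ => haS)).1
  have hswap : (∫ z in Set.Ioo (0:ℝ) 1, ∑' f : Fin n → ℕ, G f z)
      = ∑' f : Fin n → ℕ, ∫ z in Set.Ioo (0:ℝ) 1, G f z := by
    apply MeasureTheory.integral_tsum hmeasG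
    have hlint : ∀ f : Fin n → ℕ, (∫⁻ z in Set.Ioo (0:ℝ) 1, ‖G f z‖₊)
        = ENNReal.ofReal (∫ z in Set.Ioo (0:ℝ) 1, G f z) := by
      intro f
      have hae : ∀ᵐ z ∂(volume.restrict (Set.Ioo (0:ℝ) 1)),
          (‖G f z‖₊ : ℝ≥0∞) = ENNReal.ofReal (G f z) := by
        filter_upwards [MeasureTheory.ae_restrict_mem measurableSet_Ioo] with z hz
        exact Real.enorm_eq_ofReal (hGnn f z hz)
      have hnn : 0 ≤ᵐ[volume.restrict (Set.Ioo (0:ℝ) 1)] G f := by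
        filter_upwards [MeasureTheory.ae_restrict_mem measurableSet_Ioo] with z hz
        exact hGnn f z hz
      rw [MeasureTheory.lintegral_congr_ae hae,
        ← MeasureTheory.ofReal_integral_eq_lintegral_ofReal (hGint f) hnn]
    have hb : (∑' f : Fin n → ℕ, ∫⁻ z in Set.Ioo (0:ℝ) 1, ‖G f z‖₊) < ⊤ :=
      calc (∑' f : Fin n → ℕ, ∫⁻ z in Set.Ioo (0:ℝ) 1, ‖G f z‖₊)
          = ∑' f : Fin n → ℕ, ENNReal.ofReal (∫ z in Set.Ioo (0:ℝ) 1, G f z) := tsum_congr hlint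
        _ ≤ ∑' f : Fin n → ℕ, ENNReal.ofReal (((i-1).factorial : ℝ) * ∏ l, (p (f l)).toReal) :=
            ENNReal.tsum_le_tsum fun f => ENNReal.ofReal_le_ofReal (hGbound f)
        _ = ENNReal.ofReal (∑' f : Fin n → ℕ, ((i-1).factorial : ℝ) * ∏ l, (p (f l)).toReal) :=
            (ENNReal.ofReal_tsum_of_nonneg
              (fun f => mul_nonneg (by positivity) (Finset.prod_nonneg fun l _ => ha0 _))
              (hPsum.mul_left _)).symm
        _ < ⊤ := ENNReal.ofReal_lt_top
    exact hb.ne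
  have hpw : ∀ z ∈ Set.Ioo (0:ℝ) 1,
      (1 - z) ^ (i-1) * (∑' m : ℕ, (p m).toReal * (u*z) ^ m) ^ (n-1) *
        iteratedDeriv i (fun w => ∑' m : ℕ, (p m).toReal * w ^ m) (u*z)
      = ∑' f : Fin n → ℕ, G f z := by
    intro z hz
    have hw0 : 0 ≤ u * z := mul_nonneg hu0 hz.1.le
    have hw1 : u * z < 1 := lt_of_le_of_lt (mul_le_of_le_one_left hz.1.le hu1) hz.2
    have hd := iterD (a := fun m => (p m).toReal) ha0 ha1 i
      (Set.mem_Ioo.2 ⟨by linarith, hw1⟩)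
    beta_reduce at hd
    rw [hd]
    have hpe := pointwise_eq (a := fun m => (p m).toReal) ha0 ha1 n i hn hw0 hw1
    beta_reduce at hpe
    rw [mul_assoc, hpe, ← tsum_mul_left]
    apply tsum_congr
    intro f
    simp only [hG]
    ring
  calc (∑' f : Fin n → ℕ, ∫ z in (0:ℝ)..1, G f z)
      = ∑' f : Fin n → ℕ, ∫ z in Set.Ioo (0:ℝ) 1, G f z := tsum_congr fun f => (hGval f).symm
    _ = ∫ z in Set.Ioo (0:ℝ) 1, ∑' f : Fin n → ℕ, G f z := hswap.symm
    _ = ∫ z in Set.Ioo (0:ℝ) 1, (1 - z) ^ (i-1) * (∑' m : ℕ, (p m).toReal * (u*z) ^ m) ^ (n-1) *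
          iteratedDeriv i (fun w => ∑' m : ℕ, (p m).toReal * w ^ m) (u*z) :=
        MeasureTheory.setIntegral_congr_fun measurableSet_Ioo (fun z hz => (hpw z hz).symm)
    _ = ∫ z in (0:ℝ)..1, (1 - z) ^ (i-1) * (∑' m : ℕ, (p m).toReal * (u*z) ^ m) ^ (n-1) *
          iteratedDeriv i (fun w => ∑' m : ℕ, (p m).toReal * w ^ m) (u*z) := by
        rw [intervalIntegral.integral_of_le zero_le_one, MeasureTheory.integral_Ioc_eq_integral_Ioo]
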